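/- Let K and L be compact Hausdorff spaces, let T : C(K) → C(L) be a bijective bounded linear map, and for each x ∈ K let μ_x be a regular finite signed Borel measure on L with ∫_L (Tg) dμ_x = g(x) for all g ∈ C(K). Let N ≥ 1, let Z₁ ⊆ Z₂ ⊆ … ⊆ Z_N = L be closed subsets of L, let η > 0, let x₀ ∈ K, and suppose U ⊆ K is an open neighbourhood of x₀ such that | |μ_x|(Z_j) − |μ_{x₀}|(Z_j) | < η for every 1 ≤ j ≤ N and every x ∈ U. Then there are an open set V with x₀ ∈ V ⊆ U and compact sets L_j ⊆ Z_{j+1} ∖ Z_j for 1 ≤ j ≤ N−1 such that |μ_x|(L_j) > |μ_x|(Z_{j+1} ∖ Z_j) − 4η for every x ∈ V and every 1 ≤ j ≤ N−1. -/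

import Mathlib

open MeasureTheory

/-- Integral of a real function against a signed measure, via the Jordan decomposition. -/
noncomputable def sInteg {X : Type*} [MeasurableSpace X] (μ : SignedMeasure X) (g : X → ℝ) : ℝ :=
  ∫ x, g x ∂μ.toJordanDecomposition.posPart - ∫ x, g x ∂μ.toJordanDecomposition.negPart

/-- The (real-valued) total variation of a signed measure on a set. -/
noncomputable def tvr {X : Type*} [MeasurableSpace X] (μ : SignedMeasure X) (S : Set X) : ℝ :=
  (μ.totalVariation S).toReal

section Aux

variable {X : Type*} [MeasurableSpace X]

instance tv_finite (ν : SignedMeasure X) : IsFiniteMeasure ν.totalVariation := by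
  unfold SignedMeasure.totalVariation
  infer_instance

lemma mr_mono (m : Measure X) [IsFiniteMeasure m] {A B : Set X} (h : A ⊆ B) :
    (m A).toReal ≤ (m B).toReal :=
  ENNReal.toReal_mono (measure_ne_top _ _) (measure_mono h)

lemma mr_union (m : Measure X) [IsFiniteMeasure m] {A B : Set X} (hd : Disjoint A B)
    (hB : MeasurableSet B) : (m (A ∪ B)).toReal = (m A).toReal + (m B).toReal := by
  rw [measure_union hd hB, ENNReal.toReal_add (measure_ne_top _ _) (measure_ne_top _ _)]

lemma mr_diff (m : Measure X) [IsFiniteMeasure m] {A B : Set X} (h : B ⊆ A)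
    (hB : MeasurableSet B) : (m (A \ B)).toReal = (m A).toReal - (m B).toReal := by
  rw [measure_diff h hB.nullMeasurableSet (measure_ne_top _ _),
    ENNReal.toReal_sub_of_le (measure_mono h) (measure_ne_top _ _)]

lemma exists_compact_real (m : Measure X) [TopologicalSpace X] [IsFiniteMeasure m] [m.Regular]
    {A : Set X} (hA : MeasurableSet A) {ε : ℝ} (hε : 0 < ε) :
    ∃ C, C ⊆ A ∧ IsCompact C ∧ (m A).toReal < (m C).toReal + ε := by
  obtain ⟨C, hCA, hCc, hlt⟩ := hA.exists_isCompact_lt_add (μ := m) (measure_ne_top _ _)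
      (ε := ENNReal.ofReal ε) (ENNReal.ofReal_pos.2 hε).ne'
  refine ⟨C, hCA, hCc, ?_⟩
  have h2 : (m A).toReal < ((m C) + ENNReal.ofReal ε).toReal :=
    (ENNReal.toReal_lt_toReal (measure_ne_top _ _)
      (by simp [measure_ne_top])).2 hlt
  rwa [ENNReal.toReal_add (measure_ne_top _ _) ENNReal.ofReal_ne_top,
    ENNReal.toReal_ofReal hε.le] at h2

lemma exists_open_real (m : Measure X) [TopologicalSpace X] [IsFiniteMeasure m] [m.OuterRegular]
    {A : Set X} {ε : ℝ} (hε : 0 < ε) :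
    ∃ O, A ⊆ O ∧ IsOpen O ∧ (m O).toReal < (m A).toReal + ε := by
  obtain ⟨O, hAO, hOopen, hlt⟩ := A.exists_isOpen_lt_add (μ := m) (measure_ne_top _ _)
      (ε := ENNReal.ofReal ε) (ENNReal.ofReal_pos.2 hε).ne'
  refine ⟨O, hAO, hOopen, ?_⟩
  have h2 : (m O).toReal < ((m A) + ENNReal.ofReal ε).toReal :=
    (ENNReal.toReal_lt_toReal (measure_ne_top _ _)
      (by simp [measure_ne_top])).2 hlt
  rwa [ENNReal.toReal_add (measure_ne_top _ _) ENNReal.ofReal_ne_top,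
    ENNReal.toReal_ofReal hε.le] at h2

end Aux

section Int

variable {Y : Type*} [MeasurableSpace Y] [TopologicalSpace Y] [CompactSpace Y] [BorelSpace Y]

lemma integrable_cm (m : Measure Y) [IsFiniteMeasure m] (f : C(Y, ℝ)) :
    Integrable (fun y => f y) m :=
  f.continuous.integrable_of_hasCompactSupport (HasCompactSupport.of_compactSpace _)

lemma abs_integral_le_meas (m : Measure Y) [IsFiniteMeasure m] (f : C(Y, ℝ)) {B : Set Y}
    (hB : MeasurableSet B) (h1 : ∀ y, |f y| ≤ 1) (h0 : ∀ y ∉ B, f y = 0) :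
    |∫ y, f y ∂m| ≤ (m B).toReal := by
  have hint : Integrable (fun y => f y) m := integrable_cm m f
  have h2 : ∀ y, |f y| ≤ B.indicator (fun _ => (1 : ℝ)) y := by
    intro y
    by_cases hy : y ∈ B
    · simpa [Set.indicator_of_mem hy] using h1 y
    · simp [Set.indicator_of_notMem hy, h0 y hy]
  calc |∫ y, f y ∂m| ≤ ∫ y, |f y| ∂m := by
        simpa using norm_integral_le_integral_norm (μ := m) (fun y => f y)
    _ ≤ ∫ y, B.indicator (fun _ => (1 : ℝ)) y ∂m :=
        integral_mono hint.abs ((integrable_const 1).indicator hB) h2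
    _ = (m B).toReal := by rw [integral_indicator_const (1 : ℝ) hB, smul_eq_mul, mul_one]; rfl

lemma integral_ge_meas (m : Measure Y) [IsFiniteMeasure m] (f : C(Y, ℝ)) {C B : Set Y}
    (hC : MeasurableSet C) (hB : MeasurableSet B) (hCB : C ⊆ B)
    (h1 : ∀ y, |f y| ≤ 1) (hfC : ∀ y ∈ C, f y = 1) (h0 : ∀ y ∉ B, f y = 0) :
    (m C).toReal - (m (B \ C)).toReal ≤ ∫ y, f y ∂m := by
  have hpt : ∀ y, C.indicator (fun _ => (1 : ℝ)) y - (B \ C).indicator (fun _ => (1 : ℝ)) y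
      ≤ f y := by
    intro y
    by_cases hyC : y ∈ C
    · simp [Set.indicator_of_mem hyC,
        Set.indicator_of_notMem (fun h : y ∈ B \ C => h.2 hyC), hfC y hyC]
    by_cases hyB : y ∈ B
    · have h := (abs_le.1 (h1 y)).1
      simp only [Set.indicator_of_notMem hyC,
        Set.indicator_of_mem (show y ∈ B \ C from ⟨hyB, hyC⟩)]
      linarith
    · simp [Set.indicator_of_notMem hyC,
        Set.indicator_of_notMem (fun h : y ∈ B \ C => hyB h.1), h0 y hyB]
  have hintC : Integrable (C.indicator fun _ => (1 : ℝ)) m := (integrable_const 1).indicator hC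
  have hintBC : Integrable ((B \ C).indicator fun _ => (1 : ℝ)) m :=
    (integrable_const 1).indicator (hB.diff hC)
  have h := integral_mono (hintC.sub hintBC) (integrable_cm m f)
    (fun y => by simpa using hpt y)
  simp only [Pi.sub_apply] at h
  rwa [integral_sub hintC hintBC, integral_indicator_const (1 : ℝ) hC,
    integral_indicator_const (1 : ℝ) (hB.diff hC), smul_eq_mul, smul_eq_mul, mul_one, mul_one]
    at h

end Int

section Key

variable {L : Type*} [TopologicalSpace L] [CompactSpace L] [T2Space L] [MeasurableSpace L]
  [BorelSpace L]

lemma sInteg_le_tvr (ν : SignedMeasure L) (f : C(L, ℝ)) {B : Set L} (hB : MeasurableSet B)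
    (h1 : ∀ y, |f y| ≤ 1) (h0 : ∀ y ∉ B, f y = 0) :
    sInteg ν ⇑f ≤ tvr ν B := by
  have hp := abs_integral_le_meas ν.toJordanDecomposition.posPart f hB h1 h0
  have hn := abs_integral_le_meas ν.toJordanDecomposition.negPart f hB h1 h0
  have htv : tvr ν B = (ν.toJordanDecomposition.posPart B).toReal
      + (ν.toJordanDecomposition.negPart B).toReal := by
    unfold tvr SignedMeasure.totalVariation
    rw [Measure.add_apply, ENNReal.toReal_add (measure_ne_top _ _) (measure_ne_top _ _)]
  unfold sInteg
  rw [htv]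
  have := abs_le.1 hp
  have := abs_le.1 hn
  cases abs_le.1 hp; cases abs_le.1 hn; linarith

lemma key (ν : SignedMeasure L) (hreg : ν.totalVariation.Regular)
    {W : Set L} (hW : IsOpen W) {ε : ℝ} (hε : 0 < ε) :
    ∃ O : Set L, IsOpen O ∧ closure O ⊆ W ∧ ∃ f : C(L, ℝ),
      (∀ y, |f y| ≤ 1) ∧ (∀ y ∉ O, f y = 0) ∧
        tvr ν W - 7 * ε < sInteg ν ⇑f := by
  haveI := hreg
  set m := ν.totalVariation with hm
  set p := ν.toJordanDecomposition.posPart with hp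
  set n := ν.toJordanDecomposition.negPart with hn
  have hmpn : ∀ s, m s = p s + n s := fun s => by
    rw [hm]; unfold SignedMeasure.totalVariation; rw [Measure.add_apply]
  have hpm : ∀ s, p s ≤ m s := fun s => (hmpn s) ▸ le_self_add
  have hnm : ∀ s, n s ≤ m s := fun s => (hmpn s) ▸ le_add_self
  -- compact K almost filling W
  obtain ⟨K, hKW, hKc, hKlt⟩ := exists_compact_real m hW.measurableSet hε
  -- small open neighbourhood of K
  obtain ⟨O', hKO', hO'open, hO'lt⟩ := exists_open_real m (A := K) hε
  obtain ⟨O'', hO''open, hKO'', hclO''⟩ := normal_exists_closure_subset hKc.isClosed hW hKW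
  set O := O' ∩ O'' with hO
  have hOopen : IsOpen O := hO'open.inter hO''open
  have hKO : K ⊆ O := Set.subset_inter hKO' hKO''
  have hclO : closure O ⊆ W :=
    (closure_mono Set.inter_subset_right).trans hclO''
  have hOK : (m (O \ K)).toReal < ε := by
    have h1 : (m (O \ K)).toReal ≤ (m (O' \ K)).toReal :=
      mr_mono m (Set.diff_subset_diff_left Set.inter_subset_left)
    rw [mr_diff m hKO' hKc.measurableSet] at h1
    linarith
  -- Hahn decomposition
  obtain ⟨S, hSm, hpS, hnS⟩ := ν.toJordanDecomposition.mutuallySingular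
  set Ap := K \ S with hAp
  set An := K ∩ S with hAn
  have hApm : MeasurableSet Ap := hKc.measurableSet.diff hSm
  have hAnm : MeasurableSet An := hKc.measurableSet.inter hSm
  obtain ⟨Cp, hCpA, hCpc, hCplt⟩ := exists_compact_real m hApm hε
  obtain ⟨Cn, hCnA, hCnc, hCnlt⟩ := exists_compact_real m hAnm hε
  have hCpO : Cp ⊆ O := fun y hy => hKO (hCpA hy).1
  have hCnO : Cn ⊆ O := fun y hy => hKO (hCnA hy).1
  -- Urysohn functions
  have hdisj1 : Disjoint (Cn ∪ Oᶜ) Cp := by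
    refine Set.disjoint_left.2 fun y hy hyp => ?_
    rcases hy with hy | hy
    · exact (hCpA hyp).2 (hCnA hy).2
    · exact hy (hCpO hyp)
  have hdisj2 : Disjoint (Cp ∪ Oᶜ) Cn := by
    refine Set.disjoint_left.2 fun y hy hyn => ?_
    rcases hy with hy | hy
    · exact (hCpA hy).2 (hCnA hyn).2
    · exact hy (hCnO hyn)
  obtain ⟨u, hu0, hu1, huI⟩ := exists_continuous_zero_one_of_isClosed
    (hCnc.isClosed.union hOopen.isClosed_compl) hCpc.isClosed hdisj1
  obtain ⟨v, hv0, hv1, hvI⟩ := exists_continuous_zero_one_of_isClosed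
    (hCpc.isClosed.union hOopen.isClosed_compl) hCnc.isClosed hdisj2
  set f : C(L, ℝ) := u - v with hf
  have hf1 : ∀ y, |f y| ≤ 1 := by
    intro y
    have h1 := huI y
    have h2 := hvI y
    simp only [Set.mem_Icc] at h1 h2
    simp only [hf, ContinuousMap.sub_apply]
    rw [abs_le]
    constructor <;> linarith
  have hf0 : ∀ y ∉ O, f y = 0 := by
    intro y hy
    have h1 : u y = 0 := hu0 (Or.inr hy)
    have h2 : v y = 0 := hv0 (Or.inr hy)
    simp [hf, ContinuousMap.sub_apply, h1, h2]
  have hfCp : ∀ y ∈ Cp, f y = 1 := by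
    intro y hy
    have h1 : u y = 1 := hu1 hy
    have h2 : v y = 0 := hv0 (Or.inl hy)
    simp [hf, ContinuousMap.sub_apply, h1, h2]
  have hfCn : ∀ y ∈ Cn, (-f) y = 1 := by
    intro y hy
    have h1 : u y = 0 := hu0 (Or.inl hy)
    have h2 : v y = 1 := hv1 hy
    simp [hf, ContinuousMap.neg_apply, ContinuousMap.sub_apply, h1, h2]
  -- integral lower bounds
  have hip := integral_ge_meas p f hCpc.measurableSet hOopen.measurableSet hCpO hf1 hfCp hf0
  have hin := integral_ge_meas n (-f) hCnc.measurableSet hOopen.measurableSet hCnO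
    (fun y => by rw [ContinuousMap.neg_apply, abs_neg]; exact hf1 y) hfCn
    (fun y hy => by rw [ContinuousMap.neg_apply, hf0 y hy, neg_zero])
  have hin' : (n Cn).toReal - (n (O \ Cn)).toReal ≤ - ∫ y, f y ∂n := by
    have : ∫ y, (-f) y ∂n = - ∫ y, f y ∂n := by
      simp only [ContinuousMap.neg_apply]
      exact integral_neg _
    linarith [hin, this.symm.le, this.le]
  -- measure bounds on the exceptional parts
  have hsubp : O \ Cp ⊆ (O \ K) ∪ (Ap \ Cp) ∪ An := by
    intro y hy
    by_cases hyK : y ∈ K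
    · by_cases hyS : y ∈ S
      · exact Or.inr ⟨hyK, hyS⟩
      · exact Or.inl (Or.inr ⟨⟨hyK, hyS⟩, hy.2⟩)
    · exact Or.inl (Or.inl ⟨hy.1, hyK⟩)
  have hsubn : O \ Cn ⊆ (O \ K) ∪ (An \ Cn) ∪ Ap := by
    intro y hy
    by_cases hyK : y ∈ K
    · by_cases hyS : y ∈ S
      · exact Or.inl (Or.inr ⟨⟨hyK, hyS⟩, hy.2⟩)
      · exact Or.inr ⟨hyK, hyS⟩
    · exact Or.inl (Or.inl ⟨hy.1, hyK⟩)
  have hpAn : p An = 0 := measure_mono_null Set.inter_subset_right hpS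
  have hnAp : n Ap = 0 := measure_mono_null (fun y hy => hy.2) hnS
  have hpO2 : (p (O \ Cp)).toReal < 2 * ε := by
    have h1 : p (O \ Cp) ≤ m (O \ K) + m (Ap \ Cp) := by
      calc p (O \ Cp) ≤ p ((O \ K) ∪ (Ap \ Cp) ∪ An) := measure_mono hsubp
        _ ≤ p ((O \ K) ∪ (Ap \ Cp)) + p An := measure_union_le _ _
        _ = p ((O \ K) ∪ (Ap \ Cp)) := by rw [hpAn, add_zero]
        _ ≤ p (O \ K) + p (Ap \ Cp) := measure_union_le _ _
        _ ≤ m (O \ K) + m (Ap \ Cp) := add_le_add (hpm _) (hpm _)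
    have h2 : (p (O \ Cp)).toReal ≤ (m (O \ K)).toReal + (m (Ap \ Cp)).toReal := by
      rw [← ENNReal.toReal_add (measure_ne_top _ _) (measure_ne_top _ _)]
      exact ENNReal.toReal_mono (by simp [measure_ne_top]) h1
    have h3 : (m (Ap \ Cp)).toReal < ε := by
      rw [mr_diff m hCpA hCpc.measurableSet]; linarith
    linarith
  have hnO2 : (n (O \ Cn)).toReal < 2 * ε := by
    have h1 : n (O \ Cn) ≤ m (O \ K) + m (An \ Cn) := by
      calc n (O \ Cn) ≤ n ((O \ K) ∪ (An \ Cn) ∪ Ap) := measure_mono hsubn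
        _ ≤ n ((O \ K) ∪ (An \ Cn)) + n Ap := measure_union_le _ _
        _ = n ((O \ K) ∪ (An \ Cn)) := by rw [hnAp, add_zero]
        _ ≤ n (O \ K) + n (An \ Cn) := measure_union_le _ _
        _ ≤ m (O \ K) + m (An \ Cn) := add_le_add (hnm _) (hnm _)
    have h2 : (n (O \ Cn)).toReal ≤ (m (O \ K)).toReal + (m (An \ Cn)).toReal := by
      rw [← ENNReal.toReal_add (measure_ne_top _ _) (measure_ne_top _ _)]
      exact ENNReal.toReal_mono (by simp [measure_ne_top]) h1
    have h3 : (m (An \ Cn)).toReal < ε := by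
      rw [mr_diff m hCnA hCnc.measurableSet]; linarith
    linarith
  -- identify masses of Cp, Cn
  have hnCp : n Cp = 0 := measure_mono_null (fun y hy => (hCpA hy).2) hnS
  have hpCn : p Cn = 0 := measure_mono_null (fun y hy => (hCnA hy).2) hpS
  have hmCp : m Cp = p Cp := by rw [hmpn, hnCp, add_zero]
  have hmCn : m Cn = n Cn := by rw [hmpn, hpCn, zero_add]
  have hK2 : (m K).toReal = (m Ap).toReal + (m An).toReal := by
    rw [← mr_union m Set.disjoint_sdiff_inter hAnm, Set.diff_union_inter]
  refine ⟨O, hOopen, hclO, f, hf1, hf0, ?_⟩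
  have hs : sInteg ν ⇑f = (∫ y, f y ∂p) - ∫ y, f y ∂n := rfl
  have htvrW : tvr ν W = (m W).toReal := rfl
  rw [hs, htvrW]
  have e1 : (p Cp).toReal = (m Cp).toReal := by rw [hmCp]
  have e2 : (n Cn).toReal = (m Cn).toReal := by rw [hmCn]
  linarith

end Key



/-- Lemma on isomorphisms, iterated version: for closed sets `Z₁ ⊆ … ⊆ Z_N = L` on whose
variations the measures `μ_x` have small oscillation near `x₀`, there exist a neighbourhood
`V` of `x₀` and compact sets `L_j ⊆ Z_{j+1} ∖ Z_j` carrying almost all of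
`|μ_x|(Z_{j+1} ∖ Z_j)` for every `x ∈ V`. -/
theorem stmt11 {K L : Type*}
    [TopologicalSpace K] [CompactSpace K] [T2Space K]
    [TopologicalSpace L] [CompactSpace L] [T2Space L] [MeasurableSpace L] [BorelSpace L]
    (T : C(K, ℝ) →L[ℝ] C(L, ℝ)) (hTbij : Function.Bijective T)
    (μ : K → SignedMeasure L) (hμreg : ∀ x, (μ x).totalVariation.Regular)
    (hμ : ∀ (x : K) (g : C(K, ℝ)), sInteg (μ x) (T g) = g x)
    (N : ℕ) (hN : 1 ≤ N) (Z : ℕ → Set L)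
    (hZclosed : ∀ j, 1 ≤ j → j ≤ N → IsClosed (Z j))
    (hZmono : ∀ j, 1 ≤ j → j < N → Z j ⊆ Z (j + 1))
    (hZN : Z N = Set.univ)
    (η : ℝ) (hη : 0 < η) (x₀ : K) (U : Set K) (hU : IsOpen U) (hx₀ : x₀ ∈ U)
    (hosc : ∀ x ∈ U, ∀ j, 1 ≤ j → j ≤ N → |tvr (μ x) (Z j) - tvr (μ x₀) (Z j)| < η) :
    ∃ V : Set K, IsOpen V ∧ x₀ ∈ V ∧ V ⊆ U ∧
      ∃ Ls : ℕ → Set L, ∀ j, 1 ≤ j → j ≤ N - 1 →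
        IsCompact (Ls j) ∧ Ls j ⊆ Z (j + 1) \ Z j ∧
          ∀ x ∈ V, tvr (μ x) (Z (j + 1) \ Z j) - 4 * η < tvr (μ x) (Ls j) := by
  have hη8 : 0 < η / 8 := by linarith
  set ν := μ x₀ with hν
  have H : ∀ j : ℕ, ∃ (O : Set L) (g : C(K, ℝ)), 1 ≤ j → j ≤ N - 1 →
      IsOpen O ∧ closure O ⊆ (Z j)ᶜ ∧ (∀ x : K, g x ≤ tvr (μ x) O) ∧
        tvr ν ((Z j)ᶜ) - η < g x₀ := by
    intro j
    by_cases hj : 1 ≤ j ∧ j ≤ N - 1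
    · obtain ⟨hj1, hj2⟩ := hj
      have hZo : IsOpen ((Z j)ᶜ) := (hZclosed j hj1 (by omega)).isOpen_compl
      obtain ⟨O, hOopen, hOcl, f, hf1, hf0, hfint⟩ := key ν (hμreg x₀) hZo hη8
      obtain ⟨g, hg⟩ := hTbij.2 f
      refine ⟨O, g, fun _ _ => ⟨hOopen, hOcl, ?_, ?_⟩⟩
      · intro x
        have h1 := hμ x g
        rw [hg] at h1
        have h2 := sInteg_le_tvr (μ x) f hOopen.measurableSet hf1 hf0
        rw [← h1]
        exact h2
      · have h0 := hμ x₀ g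
        rw [hg] at h0
        rw [← hν] at h0
        linarith [h0.le, h0.ge]
    · exact ⟨∅, 0, fun h1 h2 => absurd ⟨h1, h2⟩ hj⟩
  choose O g hH using H
  refine ⟨U ∩ ⋂ j ∈ Finset.Icc 1 (N - 1), {x : K | tvr ν ((Z j)ᶜ) - η < g j x},
    hU.inter (isOpen_biInter_finset fun j _ =>
      isOpen_lt continuous_const (g j).continuous), ?_, Set.inter_subset_left,
    fun j => closure (O j) ∩ Z (j + 1), ?_⟩
  · refine ⟨hx₀, Set.mem_iInter₂.2 fun j hj => ?_⟩
    obtain ⟨h1, h2⟩ := Finset.mem_Icc.1 hj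
    exact (hH j h1 h2).2.2.2
  · intro j hj1 hj2
    obtain ⟨hOopen, hOcl, hgle, hgx₀⟩ := hH j hj1 hj2
    have hjN : j < N := by omega
    have hj1N : j ≤ N := by omega
    have hj1' : 1 ≤ j + 1 := by omega
    have hj2' : j + 1 ≤ N := by omega
    have hZjm : MeasurableSet (Z j) := (hZclosed j hj1 hj1N).measurableSet
    have hZj1c : IsClosed (Z (j + 1)) := hZclosed (j + 1) hj1' hj2'
    have hZj1m : MeasurableSet (Z (j + 1)) := hZj1c.measurableSet
    refine ⟨(isClosed_closure.inter hZj1c).isCompact, ?_, ?_⟩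
    · intro y hy
      exact ⟨hy.2, hOcl hy.1⟩
    · intro x hxV
      have hxU : x ∈ U := hxV.1
      have hxg : tvr ν ((Z j)ᶜ) - η < g j x := by
        have h := hxV.2
        rw [Set.mem_iInter₂] at h
        exact h j (Finset.mem_Icc.2 ⟨hj1, hj2⟩)
      have t1 : tvr (μ x) (Z (j + 1) \ Z j)
          = tvr (μ x) (Z (j + 1)) - tvr (μ x) (Z j) :=
        mr_diff ((μ x).totalVariation) (hZmono j hj1 hjN) hZjm
      have t2 : tvr (μ x) ((Z (j + 1))ᶜ)
          = tvr (μ x) Set.univ - tvr (μ x) (Z (j + 1)) := by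
        have h := mr_diff ((μ x).totalVariation) (Set.subset_univ (Z (j + 1))) hZj1m
        rw [← Set.compl_eq_univ_diff] at h
        exact h
      have t2b : tvr (μ x) Set.univ = tvr (μ x) (Z N) := by rw [hZN]
      have t3 : tvr (μ x) (O j)
          = tvr (μ x) (O j ∩ Z (j + 1)) + tvr (μ x) (O j \ Z (j + 1)) := by
        have hd : Disjoint (O j ∩ Z (j + 1)) (O j \ Z (j + 1)) :=
          Set.disjoint_left.2 fun y hy1 hy2 => hy2.2 hy1.2
        have h := mr_union ((μ x).totalVariation) hd (hOopen.measurableSet.diff hZj1m)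
        rw [Set.inter_union_diff] at h
        exact h
      have t4 : tvr (μ x) (O j \ Z (j + 1)) ≤ tvr (μ x) ((Z (j + 1))ᶜ) :=
        mr_mono ((μ x).totalVariation) fun y hy => hy.2
      have t5 : tvr (μ x) (O j ∩ Z (j + 1)) ≤ tvr (μ x) (closure (O j) ∩ Z (j + 1)) :=
        mr_mono ((μ x).totalVariation) (Set.inter_subset_inter_left _ subset_closure)
      have t6 : g j x ≤ tvr (μ x) (O j) := hgle x
      have t7 : tvr ν ((Z j)ᶜ) = tvr ν Set.univ - tvr ν (Z j) := by
        have h := mr_diff (ν.totalVariation) (Set.subset_univ (Z j)) hZjm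
        rw [← Set.compl_eq_univ_diff] at h
        exact h
      have t7b : tvr ν Set.univ = tvr ν (Z N) := by rw [hZN]
      have osc1 := abs_lt.1 (hosc x hxU N hN le_rfl)
      have osc2 := abs_lt.1 (hosc x hxU j hj1 hj1N)
      linarith [osc1.1, osc1.2, osc2.1, osc2.2]
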